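/- Let q be an odd prime and a ∈ F_q^×. Let (X̃_i)_{i∈I} be independent random variables taking value 0 with probability 3/4 and each of ±1 with probability 1/8, with |I| ≤ q, and let (X_i)_{i∈I} be independent uniform ±1 random variables. Then for every x ∈ F_q, max_y P[∑_{i∈I} X_i a^i = y] ≤ P[∑_{i∈I} X̃_i a^i = 0]. -/

import Mathlib

open Finset

/-- The value of the lazy symmetric step: a uniform element of `Fin 8` is mapped to `1`
or `-1` each with probability `1/8` and to `0` with probability `3/4`. -/
def lazyStep (k : Fin 8) : ℤ := if (k : ℕ) = 6 then 1 else if (k : ℕ) = 7 then -1 else 0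


open Complex

variable {q : ℕ} [NeZero q]

noncomputable def ee : AddChar (ZMod q) ℂ := ZMod.stdAddChar

lemma ee_abs (x : ZMod q) : ‖ee x‖ = 1 := by
  simp only [ee, ZMod.stdAddChar_apply]; exact Circle.norm_coe _

lemma ee_normSq (x : ZMod q) : Complex.normSq (ee x) = 1 := by
  rw [Complex.normSq_eq_norm_sq, ee_abs]; norm_num

lemma ee_neg_re (x : ZMod q) : (ee (-x)).re = (ee x).re := by
  rw [AddChar.map_neg_eq_inv, Complex.inv_re, ee_normSq, div_one]

lemma ee_neg_im (x : ZMod q) : (ee (-x)).im = -(ee x).im := by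
  rw [AddChar.map_neg_eq_inv, Complex.inv_im, ee_normSq, div_one]

lemma ee_add_neg (x : ZMod q) : ee x + ee (-x) = ((2 * (ee x).re : ℝ) : ℂ) := by
  apply Complex.ext <;> simp [ee_neg_re, ee_neg_im] <;> ring

lemma ee_two_re (x : ZMod q) : (ee (2 * x)).re = 2 * (ee x).re ^ 2 - 1 := by
  have h : ee (2 * x) = ee x * ee x := by
    rw [two_mul, AddChar.map_add_eq_mul]
  have h2 := ee_normSq (q := q) x
  rw [Complex.normSq_apply] at h2
  rw [h, Complex.mul_re]; nlinarith [h2]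

lemma orth (z : ZMod q) : ∑ ξ : ZMod q, ee (ξ * z) = if z = 0 then (q : ℂ) else 0 := by
  classical
  simp only [ee]
  rw [AddChar.sum_mulShift z (ZMod.isPrimitive_stdAddChar q)]
  simp [ZMod.card]

lemma ee_sum {α : Type*} (s : Finset α) (g : α → ZMod q) :
    ee (∑ i ∈ s, g i) = ∏ i ∈ s, ee (g i) := by
  classical
  induction s using Finset.cons_induction with
  | empty => simp
  | cons a s ha ih => rw [Finset.sum_cons, Finset.prod_cons, AddChar.map_add_eq_mul, ih]

lemma count_eq {ι K : Type*} [Fintype ι] [DecidableEq ι] [Fintype K] [DecidableEq K]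
    (step : ι → K → ZMod q) (y : ZMod q) :
    ((univ.filter (fun f : ι → K => ∑ i, step i (f i) = y)).card : ℂ) * q
      = ∑ ξ : ZMod q, ee (ξ * (-y)) * ∏ i, ∑ k : K, ee (ξ * step i k) := by
  classical
  have h1 : ∀ ξ : ZMod q, ∏ i, ∑ k : K, ee (ξ * step i k)
      = ∑ f : ι → K, ∏ i, ee (ξ * step i (f i)) := by
    intro ξ
    rw [Finset.prod_univ_sum]
    rw [Fintype.piFinset_univ]
  have h2 : ∀ (ξ : ZMod q) (f : ι → K),
      ee (ξ * (-y)) * ∏ i, ee (ξ * step i (f i)) = ee (ξ * (∑ i, step i (f i) - y)) := by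
    intro ξ f
    rw [mul_sub, sub_eq_add_neg, AddChar.map_add_eq_mul, ← mul_neg, mul_comm (ee _)]
    congr 1
    rw [Finset.mul_sum, ee_sum]
  calc ((univ.filter (fun f : ι → K => ∑ i, step i (f i) = y)).card : ℂ) * q
      = ∑ f : ι → K, if (∑ i, step i (f i)) - y = 0 then (q : ℂ) else 0 := by
        simp only [sub_eq_zero]
        rw [← Finset.sum_filter, Finset.sum_const, nsmul_eq_mul]
    _ = ∑ f : ι → K, ∑ ξ : ZMod q, ee (ξ * (∑ i, step i (f i) - y)) := by
        refine Finset.sum_congr rfl fun f _ => ?_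
        rw [orth]
    _ = ∑ ξ : ZMod q, ∑ f : ι → K, ee (ξ * (∑ i, step i (f i) - y)) := Finset.sum_comm
    _ = ∑ ξ : ZMod q, ee (ξ * (-y)) * ∏ i, ∑ k : K, ee (ξ * step i k) := by
        refine Finset.sum_congr rfl fun ξ _ => ?_
        rw [h1, Finset.mul_sum]
        exact Finset.sum_congr rfl fun f _ => (h2 ξ f).symm

lemma ee_re_le_one (x : ZMod q) : |(ee x).re| ≤ 1 := by
  have := Complex.abs_re_le_norm (ee x)
  rwa [ee_abs] at this

lemma key (x : ZMod q) : |(ee x).re| ≤ (3 + (ee (2 * x)).re) / 4 := by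
  have h1 := ee_re_le_one x
  rw [ee_two_re]
  nlinarith [_root_.sq_abs ((ee x).re), sq_nonneg (|(ee x).re| - 1)]

lemma hBool (a : ZMod q) (ξ : ZMod q) (m : ℕ) :
    (∑ b : Bool, ee (ξ * ((if b then (1:ZMod q) else -1) * a ^ m)))
    = ((2 * (ee (ξ * a ^ m)).re : ℝ) : ℂ) := by
  rw [Fintype.sum_bool]
  simp only [if_true, ite_true,
    show (if (false:Bool) then (1:ZMod q) else -1) = -1 from rfl, one_mul, neg_one_mul, mul_neg]
  exact ee_add_neg (ξ * a ^ m)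

lemma hFin (a : ZMod q) (ξ : ZMod q) (m : ℕ) :
    (∑ k : Fin 8, ee (ξ * (((lazyStep k : ℤ) : ZMod q) * a ^ m)))
    = ((8 * ((3 + (ee (ξ * a ^ m)).re) / 4) : ℝ) : ℂ) := by
  rw [Fin.sum_univ_eight]
  simp only [show lazyStep 0 = 0 from rfl, show lazyStep 1 = 0 from rfl,
    show lazyStep 2 = 0 from rfl, show lazyStep 3 = 0 from rfl, show lazyStep 4 = 0 from rfl,
    show lazyStep 5 = 0 from rfl, show lazyStep 6 = 1 from rfl, show lazyStep 7 = -1 from rfl,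
    Int.cast_zero, Int.cast_one, Int.cast_neg, zero_mul, mul_zero, one_mul, neg_one_mul,
    mul_neg, AddChar.map_zero_eq_one]
  have h := ee_add_neg (ξ * a ^ m)
  push_cast at h ⊢
  linear_combination h

noncomputable def Ff (q : ℕ) [NeZero q] (I : Finset ℕ) (a ξ : ZMod q) : ℝ :=
  ∏ i : {i // i ∈ I}, (ee (ξ * a ^ (i : ℕ))).re

noncomputable def Gg (q : ℕ) [NeZero q] (I : Finset ℕ) (a ξ : ZMod q) : ℝ :=
  ∏ i : {i // i ∈ I}, (3 + (ee (ξ * a ^ (i : ℕ))).re) / 4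

lemma hFG (I : Finset ℕ) (a ξ : ZMod q) : |Ff q I a ξ| ≤ Gg q I a (2 * ξ) := by
  unfold Ff Gg
  rw [Finset.abs_prod]
  refine Finset.prod_le_prod (fun i _ => abs_nonneg _) fun i _ => ?_
  rw [mul_assoc]
  exact key _


/-- replacement/symmetrization step. Let `q` be an odd prime,
`a ∈ 𝔽_q^×`, and `I` a finite index set with `|I| ≤ q`. Let `(X_i)_{i ∈ I}` be
independent uniform `±1` random variables (modelled by a uniform sign pattern
`ε : I → Bool`) and `(X̃_i)_{i ∈ I}` independent random variables taking the value `0`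
with probability `3/4` and each of `±1` with probability `1/8` (modelled by a uniform
`η : I → Fin 8` composed with `lazyStep`). Then for every `y ∈ 𝔽_q`,
`P[∑_{i∈I} X_i a^i = y] ≤ P[∑_{i∈I} X̃_i a^i = 0]`. -/
theorem stmt17 (q : ℕ) [hq : Fact q.Prime] (hq2 : q ≠ 2) (a : ZMod q) (ha : a ≠ 0)
    (I : Finset ℕ) (hcard : I.card ≤ q) (y : ZMod q) :
    ((Finset.univ.filter (fun ε : {i // i ∈ I} → Bool =>
        ∑ i ∈ I.attach, (if ε i then (1 : ZMod q) else -1) * a ^ (i : ℕ) = y)).card : ℝ)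
        / 2 ^ I.card
      ≤ ((Finset.univ.filter (fun η : {i // i ∈ I} → Fin 8 =>
        ∑ i ∈ I.attach, ((lazyStep (η i) : ℤ) : ZMod q) * a ^ (i : ℕ) = 0)).card : ℝ)
        / 8 ^ I.card := by
  classical
  haveI : NeZero q := ⟨hq.out.ne_zero⟩
  simp only [← Finset.univ_eq_attach]
  set n := I.card with hn
  set N := (Finset.univ.filter (fun ε : {i // i ∈ I} → Bool =>
      ∑ i, (if ε i then (1 : ZMod q) else -1) * a ^ (i : ℕ) = y)).card with hNdef
  set M := (Finset.univ.filter (fun η : {i // i ∈ I} → Fin 8 =>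
      ∑ i, ((lazyStep (η i) : ℤ) : ZMod q) * a ^ (i : ℕ) = 0)).card with hMdef
  -- complex identity for N
  have hN : (N : ℂ) * q = ∑ ξ : ZMod q, ee (ξ * (-y)) * ((2 ^ n * Ff q I a ξ : ℝ) : ℂ) := by
    rw [hNdef]
    rw [count_eq (fun (i : {i // i ∈ I}) (b : Bool) =>
      (if b then (1 : ZMod q) else -1) * a ^ (i : ℕ)) y]
    refine Finset.sum_congr rfl fun ξ _ => ?_
    congr 1
    have hp : (∏ i : {i // i ∈ I}, ∑ b : Bool, ee (ξ * ((if b then (1:ZMod q) else -1) * a ^ ((i:ℕ)))))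
        = ∏ i : {i // i ∈ I}, ((2 * (ee (ξ * a ^ ((i:ℕ)))).re : ℝ) : ℂ) :=
      Finset.prod_congr rfl fun i _ => hBool a ξ (i : ℕ)
    rw [hp, ← Complex.ofReal_prod]
    congr 1
    unfold Ff
    rw [Finset.prod_mul_distrib, Finset.prod_const, Finset.card_univ, Fintype.card_coe]
  -- complex identity for M
  have hM : (M : ℂ) * q = ((8 ^ n * ∑ ξ : ZMod q, Gg q I a ξ : ℝ) : ℂ) := by
    rw [hMdef]
    rw [count_eq (fun (i : {i // i ∈ I}) (k : Fin 8) =>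
      ((lazyStep k : ℤ) : ZMod q) * a ^ (i : ℕ)) 0]
    have h1 : ∀ ξ : ZMod q, ee (ξ * (-(0 : ZMod q))) * ∏ i : {i // i ∈ I}, ∑ k : Fin 8,
        ee (ξ * (((lazyStep k : ℤ) : ZMod q) * a ^ (i : ℕ)))
        = ((8 ^ n * Gg q I a ξ : ℝ) : ℂ) := by
      intro ξ
      rw [neg_zero, mul_zero, AddChar.map_zero_eq_one, one_mul]
      have hp : (∏ i : {i // i ∈ I}, ∑ k : Fin 8, ee (ξ * (((lazyStep k : ℤ) : ZMod q) * a ^ ((i:ℕ)))))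
          = ∏ i : {i // i ∈ I}, ((8 * ((3 + (ee (ξ * a ^ ((i:ℕ)))).re) / 4) : ℝ) : ℂ) :=
        Finset.prod_congr rfl fun i _ => hFin a ξ (i : ℕ)
      rw [hp, ← Complex.ofReal_prod]
      congr 1
      unfold Gg
      rw [Finset.prod_mul_distrib, Finset.prod_const, Finset.card_univ, Fintype.card_coe]
    rw [Finset.sum_congr rfl fun ξ _ => h1 ξ, ← Complex.ofReal_sum, ← Finset.mul_sum]
  have hMr : (M : ℝ) * q = 8 ^ n * ∑ ξ : ZMod q, Gg q I a ξ := by exact_mod_cast hM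
  have hNr : (N : ℝ) * q ≤ 2 ^ n * ∑ ξ : ZMod q, |Ff q I a ξ| := by
    have h1 : (N : ℝ) * q = ‖(N : ℂ) * q‖ := by
      rw [norm_mul, Complex.norm_natCast, Complex.norm_natCast]
    rw [h1, hN]
    refine le_trans (norm_sum_le _ _) ?_
    rw [Finset.mul_sum]
    refine Finset.sum_le_sum fun ξ _ => ?_
    rw [norm_mul, ee_abs, one_mul, Complex.norm_real, Real.norm_eq_abs, abs_mul, _root_.abs_pow, _root_.abs_two]
  -- comparison of sums
  have h2ne : (2 : ZMod q) ≠ 0 := by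
    intro h
    have h2 : q ∣ 2 := by
      have : ((2 : ℕ) : ZMod q) = 0 := by exact_mod_cast h
      exact (ZMod.natCast_eq_zero_iff 2 q).mp this
    exact hq2 ((Nat.prime_dvd_prime_iff_eq hq.out Nat.prime_two).mp h2)
  have hGsum : ∑ ξ : ZMod q, Gg q I a (2 * ξ) = ∑ ξ : ZMod q, Gg q I a ξ :=
    Fintype.sum_bijective (fun ξ => 2 * ξ) (mulLeft_bijective₀ (2 : ZMod q) h2ne) _ _ (fun ξ => rfl)
  have hsum : ∑ ξ : ZMod q, |Ff q I a ξ| ≤ ∑ ξ : ZMod q, Gg q I a ξ := by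
    rw [← hGsum]
    exact Finset.sum_le_sum fun ξ _ => hFG I a ξ
  -- final arithmetic
  have hq0 : (0 : ℝ) < q := by exact_mod_cast hq.out.pos
  have h2p : (0 : ℝ) < 2 ^ n := by positivity
  have h8p : (0 : ℝ) < 8 ^ n := by positivity
  rw [div_le_div_iff₀ h2p h8p]
  have hchain : (N : ℝ) * q * 8 ^ n ≤ (M : ℝ) * q * 2 ^ n := by
    calc (N : ℝ) * q * 8 ^ n ≤ (2 ^ n * ∑ ξ : ZMod q, |Ff q I a ξ|) * 8 ^ n :=
          mul_le_mul_of_nonneg_right hNr h8p.le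
      _ ≤ (2 ^ n * ∑ ξ : ZMod q, Gg q I a ξ) * 8 ^ n :=
          mul_le_mul_of_nonneg_right (mul_le_mul_of_nonneg_left hsum h2p.le) h8p.le
      _ = (8 ^ n * ∑ ξ : ZMod q, Gg q I a ξ) * 2 ^ n := by ring
      _ = (M : ℝ) * q * 2 ^ n := by rw [hMr]
  have h' : ((N : ℝ) * 8 ^ n) * q ≤ ((M : ℝ) * 2 ^ n) * q := by
    have e1 : ((N : ℝ) * 8 ^ n) * q = (N : ℝ) * q * 8 ^ n := by ring
    have e2 : ((M : ℝ) * 2 ^ n) * q = (M : ℝ) * q * 2 ^ n := by ring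
    rw [e1, e2]; exact hchain
  exact le_of_mul_le_mul_right h' hq0
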